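/- For every p ∈ (0,1) and every integer N ≥ 1, ∫_0^1 x^N dμ_p(x) = ((1−p)^N / ∏_{n=1}^N (2^n − 1)) · det A_N(p). -/

import Mathlib

open MeasureTheory

/-- The probability measure on `{0,1}` (encoded as `Bool`, `false` ↔ digit `0`,
`true` ↔ digit `1`) giving mass `p` to the digit `0` and mass `1 - p` to the digit `1`. -/
noncomputable def bernoulliBool (p : ℝ) : Measure Bool :=
  ENNReal.ofReal p • Measure.dirac false + ENNReal.ofReal (1 - p) • Measure.dirac true

/-- `ν` is the infinite product, over `n ≥ 1` (indexed here by `ℕ`, where index `n`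
stands for the digit `n+1`), of the Bernoulli measures `bernoulliBool p`:
it is characterized as the projective limit of the finite product measures. -/
def IsBernoulliProduct (p : ℝ) (ν : Measure (ℕ → Bool)) : Prop :=
  IsProjectiveLimit ν fun J : Finset ℕ => Measure.pi fun _ : J => bernoulliBool p

/-- The binary expansion map sending a 0-1 sequence `(x_n)_{n ≥ 1}` to
`∑_{n=1}^∞ x_n 2^{-n}` (index `n : ℕ` stands for the digit `n+1`). -/
noncomputable def binExpand (x : ℕ → Bool) : ℝ :=
  ∑' n : ℕ, if x n then ((2 : ℝ) ^ (n + 1))⁻¹ else 0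

/-- `μ` is the Bernoulli measure `μ_p` on `ℝ`: the pushforward under the binary
expansion map of the infinite product of Bernoulli measures on `{0,1}`. -/
def IsBernoulliMeasure (p : ℝ) (μ : Measure ℝ) : Prop :=
  ∃ ν : Measure (ℕ → Bool), IsBernoulliProduct p ν ∧ μ = ν.map binExpand

/-- The `N × N` real Hessenberg matrix `A_N(p)` (1-indexed in the paper, 0-indexed here):
row `i` (paper row `i+1`) has entries `C(i+1, j)` for `j ≤ i`, the entry
`(1 - 2^{i+1})/(1-p)` at column `j = i+1`, and `0` for `j > i+1`. -/
noncomputable def Amat (N : ℕ) (p : ℝ) : Matrix (Fin N) (Fin N) ℝ := fun i j =>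
  if (j : ℕ) ≤ (i : ℕ) then (Nat.choose ((i : ℕ) + 1) (j : ℕ) : ℝ)
  else if (j : ℕ) = (i : ℕ) + 1 then (1 - 2 ^ ((i : ℕ) + 1)) / (1 - p)
  else 0

open Finset Filter

namespace Stmt4

noncomputable def w (p : ℝ) : Bool → ℝ := fun b => if b then 1 - p else p

noncomputable def T (k : ℕ) (y : Fin k → Bool) : ℝ :=
  ∑ i : Fin k, if y i then ((2 : ℝ) ^ ((i : ℕ) + 1))⁻¹ else 0

noncomputable def a (p : ℝ) (k j : ℕ) : ℝ :=
  ∑ y : Fin k → Bool, (∏ i, w p (y i)) * T k y ^ j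

lemma sum_pi_bool (k : ℕ) (f : (Fin (k + 1) → Bool) → ℝ) :
    ∑ y : Fin (k + 1) → Bool, f y
      = ∑ z : Fin k → Bool, (f (Fin.cons false z) + f (Fin.cons true z)) := by
  rw [← Equiv.sum_comp (Fin.consEquiv fun _ => Bool) f, Fintype.sum_prod_type,
    Fintype.sum_bool]
  rw [← Finset.sum_add_distrib]
  refine Finset.sum_congr rfl fun z _ => ?_
  rw [add_comm]
  rfl

lemma T_cons (k : ℕ) (b : Bool) (z : Fin k → Bool) :
    T (k + 1) (Fin.cons b z) = (if b then (2:ℝ)⁻¹ else 0) + T k z / 2 := by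
  unfold T
  rw [Fin.sum_univ_succ]
  congr 1
  · simp [Fin.cons_zero]
  · rw [Finset.sum_div]
    refine Finset.sum_congr rfl fun i _ => ?_
    rw [Fin.cons_succ]
    by_cases h : z i <;> simp [h, Fin.val_succ, pow_succ, mul_inv]
    ring

lemma prod_w_cons (p : ℝ) (k : ℕ) (b : Bool) (z : Fin k → Bool) :
    ∏ i : Fin (k + 1), w p (Fin.cons (α := fun _ => Bool) b z i) = w p b * ∏ i : Fin k, w p (z i) := by
  rw [Fin.prod_univ_succ]
  simp [Fin.cons_zero, Fin.cons_succ]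

lemma a_succ (p : ℝ) (k N : ℕ) :
    a p (k + 1) N = (2:ℝ)⁻¹ ^ N *
      (p * a p k N + (1 - p) * ∑ j ∈ range (N + 1), (N.choose j : ℝ) * a p k j) := by
  unfold a
  rw [sum_pi_bool]
  have key : ∀ z : Fin k → Bool,
      (∏ i, w p (Fin.cons (α := fun _ => Bool) false z i)) * T (k+1) (Fin.cons false z) ^ N
        + (∏ i, w p (Fin.cons (α := fun _ => Bool) true z i)) * T (k+1) (Fin.cons true z) ^ N
      = (2:ℝ)⁻¹ ^ N * (p * ((∏ i, w p (z i)) * T k z ^ N)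
          + (1 - p) * ∑ j ∈ range (N + 1),
              (N.choose j : ℝ) * ((∏ i, w p (z i)) * T k z ^ j)) := by
    intro z
    rw [prod_w_cons, prod_w_cons, T_cons, T_cons]
    simp only [w]
    norm_num
    have h1 : T k z / 2 = T k z * (1/2 : ℝ) := by ring
    have h2 : (1/2 : ℝ) + T k z * (1/2) = (T k z + 1) * (1/2) := by ring
    rw [h1, h2, mul_pow, mul_pow, add_pow]
    simp only [one_pow, mul_one]
    rw [Finset.sum_mul, Finset.mul_sum, mul_add, Finset.mul_sum]
    have : ∀ j ∈ range (N+1), ((1 - p) * ∏ x : Fin k, if z x = true then 1 - p else p) * (T k z ^ j * ↑(N.choose j) * (1 / 2) ^ N) = (1/2:ℝ) ^ N * ((1 - p) * (↑(N.choose j) * ((∏ x : Fin k, if z x = true then 1 - p else p) * T k z ^ j))) := fun j _ => by ring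
    rw [Finset.sum_congr rfl this]
    congr 1
    · ring
    · rw [Finset.mul_sum]
  rw [Finset.sum_congr rfl fun z _ => key z]
  rw [← Finset.mul_sum, Finset.sum_add_distrib, ← Finset.mul_sum]
  congr 2
  rw [← Finset.mul_sum]
  congr 1
  rw [Finset.sum_comm]
  refine Finset.sum_congr rfl fun j _ => ?_
  rw [← Finset.mul_sum]

lemma sum_prod_w (p : ℝ) : ∀ k, ∑ y : Fin k → Bool, ∏ i, w p (y i) = 1 := by
  intro k
  induction k with
  | zero => simp
  | succ k ih =>
    rw [sum_pi_bool k (fun y => ∏ i, w p (y i))]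
    have : ∀ z : Fin k → Bool,
        (∏ i : Fin (k+1), w p (Fin.cons (α := fun _ => Bool) false z i))
          + (∏ i : Fin (k+1), w p (Fin.cons (α := fun _ => Bool) true z i))
          = ∏ i, w p (z i) := by
      intro z
      rw [prod_w_cons, prod_w_cons]
      simp only [w]
      norm_num
      ring
    rw [Finset.sum_congr rfl fun z _ => this z, ih]

lemma a_zero (p : ℝ) (k : ℕ) : a p k 0 = 1 := by
  unfold a
  simp only [pow_zero, mul_one]
  exact sum_prod_w p k

lemma T_nonneg (k : ℕ) (y : Fin k → Bool) : 0 ≤ T k y := by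
  refine Finset.sum_nonneg fun i _ => ?_
  split <;> positivity

lemma sum_pow_inv (k : ℕ) : ∑ m ∈ range k, ((2:ℝ) ^ (m + 1))⁻¹ = 1 - ((2:ℝ) ^ k)⁻¹ := by
  induction k with
  | zero => simp
  | succ k ih =>
    rw [Finset.sum_range_succ, ih]
    have h : (2:ℝ) ^ k ≠ 0 := by positivity
    field_simp
    ring

lemma T_le_one (k : ℕ) (y : Fin k → Bool) : T k y ≤ 1 := by
  have h1 : T k y ≤ ∑ i : Fin k, ((2:ℝ) ^ ((i:ℕ) + 1))⁻¹ := by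
    refine Finset.sum_le_sum fun i _ => ?_
    split
    · exact le_rfl
    · positivity
  calc T k y ≤ ∑ i : Fin k, ((2:ℝ) ^ ((i:ℕ) + 1))⁻¹ := h1
    _ = ∑ m ∈ range k, ((2:ℝ) ^ (m + 1))⁻¹ :=
        Fin.sum_univ_eq_sum_range (fun m => ((2:ℝ) ^ (m + 1))⁻¹) k
    _ = 1 - ((2:ℝ) ^ k)⁻¹ := sum_pow_inv k
    _ ≤ 1 := by
        have : (0:ℝ) ≤ ((2:ℝ) ^ k)⁻¹ := by positivity
        linarith

section MeasurePart

variable {p : ℝ} {ν : Measure (ℕ → Bool)}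

lemma bern_singleton (hp0 : 0 ≤ p) (hp1 : p ≤ 1) (b : Bool) :
    bernoulliBool p {b} = ENNReal.ofReal (w p b) := by
  cases b <;>
    simp [bernoulliBool, Measure.dirac_apply, w, Set.indicator_apply]

lemma bern_prob (hp0 : 0 ≤ p) (hp1 : p ≤ 1) : IsProbabilityMeasure (bernoulliBool p) := by
  constructor
  simp only [bernoulliBool, Measure.coe_add, Measure.coe_smul, Pi.add_apply, Pi.smul_apply,
    Measure.dirac_apply_of_mem (Set.mem_univ _), smul_eq_mul, mul_one]
  rw [← ENNReal.ofReal_add hp0 (by linarith), ← ENNReal.ofReal_one]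
  norm_num

/-- The finite-marginal map to `Fin k → Bool`. -/
lemma measurable_finmap (k : ℕ) :
    Measurable (fun (x : ℕ → Bool) (i : Fin k) => x (i : ℕ)) :=
  measurable_pi_lambda _ fun i => measurable_pi_apply _

lemma map_fin (hp0 : 0 ≤ p) (hp1 : p ≤ 1) (hν : IsBernoulliProduct p ν) (k : ℕ) :
    ν.map (fun x (i : Fin k) => x (i : ℕ))
      = Measure.pi (fun _ : Fin k => bernoulliBool p) := by
  haveI := bern_prob hp0 hp1
  refine Measure.ext_of_singleton fun y => ?_
  rw [Measure.map_apply (measurable_finmap k) (measurableSet_singleton y)]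
  set J : Finset ℕ := Finset.range k with hJ
  set z : ∀ _ : J, Bool := fun j => y ⟨j.1, Finset.mem_range.mp j.2⟩ with hz
  set r : (ℕ → Bool) → (∀ _ : J, Bool) := fun x j => x j.1 with hr
  have hrm : Measurable r := measurable_pi_lambda _ fun j => measurable_pi_apply _
  have hrr : r = J.restrict := rfl
  have hpre : (fun (x : ℕ → Bool) (i : Fin k) => x (i : ℕ)) ⁻¹' {y}
      = r ⁻¹' {z} := by
    ext x
    simp only [Set.mem_preimage, Set.mem_singleton_iff, funext_iff, Finset.restrict]
    constructor
    · intro h j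
      exact h ⟨j.1, Finset.mem_range.mp j.2⟩
    · intro h i
      have := h ⟨i.1, Finset.mem_range.mpr i.2⟩
      simpa [hz] using this
  rw [hpre, ← Measure.map_apply hrm (measurableSet_singleton z), hrr, hν J]
  rw [← Set.univ_pi_singleton z, ← Set.univ_pi_singleton y, Measure.pi_pi, Measure.pi_pi]
  rw [← Equiv.prod_comp
    (⟨fun i => ⟨i.1, Finset.mem_range.mpr i.2⟩, fun j => ⟨j.1, Finset.mem_range.mp j.2⟩,
      fun i => rfl, fun j => rfl⟩ : Fin k ≃ {x // x ∈ J})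
    (fun j => bernoulliBool p {z j})]
  refine Finset.prod_congr rfl fun i _ => ?_
  simp [hz, Fin.eta]

lemma integral_S (hp0 : 0 ≤ p) (hp1 : p ≤ 1) (hν : IsBernoulliProduct p ν) (k j : ℕ) :
    ∫ x, T k (fun i => x (i : ℕ)) ^ j ∂ν = a p k j := by
  haveI := bern_prob hp0 hp1
  have hg : Measurable (fun y : Fin k → Bool => T k y ^ j) := measurable_of_countable _
  calc ∫ x, T k (fun i => x (i : ℕ)) ^ j ∂ν
      = ∫ y, T k y ^ j ∂(ν.map (fun x (i : Fin k) => x (i : ℕ))) :=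
        (integral_map (measurable_finmap k).aemeasurable hg.aestronglyMeasurable).symm
    _ = ∫ y, T k y ^ j ∂(Measure.pi (fun _ : Fin k => bernoulliBool p)) := by
        rw [map_fin hp0 hp1 hν k]
    _ = a p k j := by
        rw [integral_fintype (Integrable.of_finite)]
        refine Finset.sum_congr rfl fun y _ => ?_
        have : Measure.pi (fun _ : Fin k => bernoulliBool p) {y}
            = ∏ i : Fin k, bernoulliBool p {y i} := by
          rw [← Set.univ_pi_singleton y, Measure.pi_pi]
        rw [measureReal_def, this, smul_eq_mul]
        congr 1
        rw [ENNReal.toReal_prod]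
        refine Finset.prod_congr rfl fun i _ => ?_
        rw [bern_singleton hp0 hp1, ENNReal.toReal_ofReal]
        cases hb : y i <;> simp [w, hb] <;> linarith

lemma nu_prob (hp0 : 0 ≤ p) (hp1 : p ≤ 1) (hν : IsBernoulliProduct p ν) :
    IsProbabilityMeasure ν := by
  haveI := bern_prob hp0 hp1
  constructor
  rw [hν.measure_univ_eq (∅ : Finset ℕ)]
  exact measure_univ

lemma summable_bin (x : ℕ → Bool) :
    Summable (fun n => if x n then ((2:ℝ) ^ (n + 1))⁻¹ else 0) := by
  have hg : Summable (fun n : ℕ => ((2:ℝ) ^ (n + 1))⁻¹) := by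
    have h2 : Summable (fun n : ℕ => ((1:ℝ)/2) ^ n) :=
      summable_geometric_of_lt_one (by norm_num) (by norm_num)
    have := h2.mul_left ((1:ℝ)/2)
    refine this.congr fun n => ?_
    rw [← pow_succ']
    simp [one_div, inv_pow]
  refine Summable.of_nonneg_of_le (fun n => ?_) (fun n => ?_) hg
  · split <;> positivity
  · split
    · exact le_rfl
    · positivity

lemma tendsto_S (x : ℕ → Bool) :
    Filter.Tendsto (fun k => T k (fun i => x (i : ℕ))) Filter.atTop (nhds (binExpand x)) := by
  have hs := (summable_bin x).hasSum.tendsto_sum_nat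
  refine hs.congr fun k => ?_
  rw [← Fin.sum_univ_eq_sum_range (fun n => if x n then ((2:ℝ) ^ (n + 1))⁻¹ else 0) k]
  rfl

lemma binExpand_nonneg (x : ℕ → Bool) : 0 ≤ binExpand x :=
  tsum_nonneg fun n => by split <;> positivity

lemma binExpand_le_one (x : ℕ → Bool) : binExpand x ≤ 1 :=
  le_of_tendsto' (tendsto_S x) fun k => T_le_one k _

lemma measurable_binExpand : Measurable binExpand := by
  refine measurable_of_tendsto_metrizable
    (f := fun k x => T k (fun i => x (i : ℕ))) (fun k => ?_) ?_
  · exact (measurable_of_countable (T k)).comp (measurable_finmap k)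
  · exact tendsto_pi_nhds.mpr tendsto_S

lemma tendsto_a (hp0 : 0 ≤ p) (hp1 : p ≤ 1) (hν : IsBernoulliProduct p ν) (j : ℕ) :
    Filter.Tendsto (fun k => a p k j) Filter.atTop (nhds (∫ x, binExpand x ^ j ∂ν)) := by
  haveI := nu_prob hp0 hp1 hν
  have h := tendsto_integral_of_dominated_convergence (μ := ν)
    (F := fun k x => T k (fun i => x (i : ℕ)) ^ j) (f := fun x => binExpand x ^ j)
    (fun _ => (1:ℝ))
    (fun k => (((measurable_of_countable (T k)).comp (measurable_finmap k)).pow_const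
      j).aestronglyMeasurable)
    (integrable_const 1)
    (fun k => Filter.Eventually.of_forall fun x => by
      have h0 := T_nonneg k (fun i => x (i : ℕ))
      have h1 := T_le_one k (fun i => x (i : ℕ))
      rw [Real.norm_eq_abs, abs_pow, abs_of_nonneg h0]
      exact pow_le_one₀ h0 h1)
    (Filter.Eventually.of_forall fun x => (tendsto_S x).pow j)
  refine h.congr fun k => ?_
  exact integral_S hp0 hp1 hν k j

end MeasurePart

end Stmt4

/-- For `p ∈ (0,1)` and `N ≥ 1`,
`∫_0^1 x^N dμ_p(x) = ((1-p)^N / ∏_{n=1}^N (2^n - 1)) * det A_N(p)`. -/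
theorem stmt4 (p : ℝ) (hp : p ∈ Set.Ioo (0 : ℝ) 1) (μ : Measure ℝ)
    (hμ : IsBernoulliMeasure p μ) (N : ℕ) (hN : 1 ≤ N) :
    ∫ x in Set.Icc (0 : ℝ) 1, x ^ N ∂μ =
      (1 - p) ^ N / (∏ n ∈ Finset.range N, ((2 : ℝ) ^ (n + 1) - 1)) * (Amat N p).det := by
  obtain ⟨hp0, hp1⟩ := hp
  obtain ⟨ν, hν, hμν⟩ := hμ
  obtain ⟨n, rfl⟩ : ∃ n, N = n + 1 := ⟨N - 1, (Nat.succ_pred_eq_of_pos hN).symm⟩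
  haveI := Stmt4.nu_prob hp0.le hp1.le hν
  have h1p : (1 : ℝ) - p ≠ 0 := by linarith
  set L : ℕ → ℝ := fun j => ∫ x, binExpand x ^ j ∂ν with hL
  have hL0 : L 0 = 1 := by
    simp [hL]
  have hfix : ∀ m : ℕ, L m = (2:ℝ)⁻¹ ^ m *
      (p * L m + (1 - p) * ∑ j ∈ range (m+1), (m.choose j : ℝ) * L j) := by
    intro m
    have h1 : Tendsto (fun k => Stmt4.a p (k+1) m) atTop (nhds (L m)) :=
      (Stmt4.tendsto_a hp0.le hp1.le hν m).comp (tendsto_add_atTop_nat 1)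
    have h2 : Tendsto (fun k => (2:ℝ)⁻¹ ^ m *
        (p * Stmt4.a p k m + (1 - p) * ∑ j ∈ range (m+1), (m.choose j : ℝ) * Stmt4.a p k j))
        atTop (nhds ((2:ℝ)⁻¹ ^ m *
        (p * L m + (1 - p) * ∑ j ∈ range (m+1), (m.choose j : ℝ) * L j))) := by
      refine Tendsto.const_mul _ (Tendsto.add ?_ ?_)
      · exact (Stmt4.tendsto_a hp0.le hp1.le hν m).const_mul _
      · refine Tendsto.const_mul _ ?_
        exact tendsto_finset_sum _ fun j _ => (Stmt4.tendsto_a hp0.le hp1.le hν j).const_mul _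
    exact tendsto_nhds_unique (h1.congr fun k => Stmt4.a_succ p k m) h2
  have hrec : ∀ m : ℕ, ((2:ℝ) ^ (m+1) - 1) * L (m+1)
      = (1 - p) * ∑ j ∈ range (m+1), ((m+1).choose j : ℝ) * L j := by
    intro m
    have h := hfix (m+1)
    rw [Finset.sum_range_succ, inv_pow, Nat.choose_self, Nat.cast_one, one_mul] at h
    have h2 : ((2:ℝ)) ^ (m+1) ≠ 0 := by positivity
    field_simp at h
    linear_combination h
  set c : ℝ := ((2:ℝ) ^ (n+1) - 1)/(1-p) * L (n+1) with hc
  set A := Amat (n+1) p with hA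
  set v : Fin (n+1) → ℝ := fun i => L i with hv
  have hrow : A.mulVec v = fun i => if i = Fin.last n then c else 0 := by
    funext i
    have hsum : A.mulVec v i = ∑ m ∈ range (n+1),
        (if m ≤ (i:ℕ) then (((i:ℕ)+1).choose m : ℝ)
         else if m = (i:ℕ)+1 then (1 - 2^((i:ℕ)+1))/(1-p) else 0) * L m := by
      show (∑ j : Fin (n+1), A i j * v j) = _
      exact Fin.sum_univ_eq_sum_range (fun m =>
        (if m ≤ (i:ℕ) then (((i:ℕ)+1).choose m : ℝ)
         else if m = (i:ℕ)+1 then (1 - 2^((i:ℕ)+1))/(1-p) else 0) * L m) (n+1)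
    by_cases hi : i = Fin.last n
    · subst hi
      rw [if_pos rfl, hsum]
      simp only [Fin.val_last]
      have hcong : ∀ m ∈ range (n+1),
          (if m ≤ n then ((n+1).choose m : ℝ)
            else if m = n+1 then (1 - 2^(n+1))/(1-p) else 0) * L m
          = ((n+1).choose m : ℝ) * L m := fun m hm => by
        rw [if_pos (Nat.lt_succ_iff.mp (Finset.mem_range.mp hm))]
      rw [Finset.sum_congr rfl hcong, hc]
      have := hrec n
      field_simp
      linarith [this]
    · rw [if_neg hi, hsum]
      have hlt : (i:ℕ) < n := by
        have := i.2
        rcases Nat.lt_succ_iff_lt_or_eq.mp i.2 with h | h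
        · exact h
        · exact absurd (Fin.ext h) hi
      have hsub : ∑ m ∈ range (n+1),
          (if m ≤ (i:ℕ) then (((i:ℕ)+1).choose m : ℝ)
            else if m = (i:ℕ)+1 then (1 - 2^((i:ℕ)+1))/(1-p) else 0) * L m
          = ∑ m ∈ range ((i:ℕ)+2),
          (if m ≤ (i:ℕ) then (((i:ℕ)+1).choose m : ℝ)
            else if m = (i:ℕ)+1 then (1 - 2^((i:ℕ)+1))/(1-p) else 0) * L m := by
        symm
        refine Finset.sum_subset ?_ ?_
        · intro m hm
          rw [Finset.mem_range] at hm ⊢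
          omega
        · intro m _ hnm
          rw [Finset.mem_range] at hnm
          rw [if_neg (by omega), if_neg (by omega), zero_mul]
      rw [hsub, Finset.sum_range_succ]
      have hcong : ∀ m ∈ range ((i:ℕ)+1),
          (if m ≤ (i:ℕ) then (((i:ℕ)+1).choose m : ℝ)
            else if m = (i:ℕ)+1 then (1 - 2^((i:ℕ)+1))/(1-p) else 0) * L m
          = (((i:ℕ)+1).choose m : ℝ) * L m := fun m hm => by
        rw [if_pos (Nat.lt_succ_iff.mp (Finset.mem_range.mp hm))]
      rw [Finset.sum_congr rfl hcong, if_neg (by omega), if_pos rfl]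
      have := hrec (i:ℕ)
      have hsumval : ∑ m ∈ range ((i:ℕ)+1), (((i:ℕ)+1).choose m : ℝ) * L m
          = ((2:ℝ) ^ ((i:ℕ)+1) - 1) * L ((i:ℕ)+1) / (1-p) := by
        field_simp
        linarith [this]
      rw [hsumval]
      field_simp
      ring
  have hcram : A.det * v 0 = (A.updateCol 0 (A.mulVec v)).det := by
    have h2 : Matrix.cramer A (A.mulVec v) = A.det • v := by
      rw [Matrix.cramer_eq_adjugate_mulVec, Matrix.mulVec_mulVec, Matrix.adjugate_mul,
        Matrix.smul_mulVec, Matrix.one_mulVec]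
    have h3 := congrFun h2 0
    rw [Matrix.cramer_apply] at h3
    simpa using h3.symm
  have hupd : A.mulVec v = c • (Pi.single (Fin.last n) 1 : Fin (n+1) → ℝ) := by
    rw [hrow]
    funext i
    rw [Pi.smul_apply, Pi.single_apply, smul_eq_mul]
    split <;> simp
  have hdet1 : (A.updateCol 0 (Pi.single (Fin.last n) 1 : Fin (n+1) → ℝ)).det
      = (-1)^n * ∏ m ∈ range n, ((1:ℝ) - 2^(m+1))/(1-p) := by
    rw [Matrix.det_succ_column_zero, Finset.sum_eq_single (Fin.last n)]
    · have hsubdet : ((A.updateCol 0 (Pi.single (Fin.last n) 1 : Fin (n+1) → ℝ)).submatrix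
          (Fin.last n).succAbove Fin.succ).det
          = ∏ i : Fin n, ((1:ℝ) - 2^((i:ℕ)+1))/(1-p) := by
        have htri : ((A.updateCol 0 (Pi.single (Fin.last n) 1 : Fin (n+1) → ℝ)).submatrix
            (Fin.last n).succAbove Fin.succ).BlockTriangular OrderDual.toDual := by
          intro a b hab
          have hab' : (a:ℕ) < (b:ℕ) := hab
          simp only [Matrix.submatrix_apply, Fin.succAbove_last]
          rw [Matrix.updateCol_ne (Fin.succ_ne_zero b), hA]
          show Amat (n+1) p a.castSucc b.succ = 0
          unfold Amat
          simp only [Fin.coe_castSucc, Fin.val_succ]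
          rw [if_neg (by omega), if_neg (by omega)]
        rw [Matrix.det_of_lowerTriangular _ htri]
        refine Finset.prod_congr rfl fun i _ => ?_
        simp only [Matrix.submatrix_apply, Fin.succAbove_last]
        rw [Matrix.updateCol_ne (Fin.succ_ne_zero i), hA]
        show Amat (n+1) p i.castSucc i.succ = ((1:ℝ) - 2^((i:ℕ)+1))/(1-p)
        unfold Amat
        simp only [Fin.coe_castSucc, Fin.val_succ]
        rw [if_neg (by omega)]
        simp
      rw [hsubdet, Matrix.updateCol_self, Pi.single_eq_same, Fin.val_last,
        ← Fin.prod_univ_eq_prod_range (fun m => ((1:ℝ) - 2^(m+1))/(1-p)) n]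
      ring
    · intro b _ hb
      rw [Matrix.updateCol_self, Pi.single_eq_of_ne hb]
      ring
    · intro h
      exact absurd (Finset.mem_univ _) h
  have hQ : ∀ m : ℕ, (0:ℝ) < ∏ j ∈ range m, ((2:ℝ) ^ (j+1) - 1) := by
    intro m
    refine Finset.prod_pos fun j _ => ?_
    have h : (1:ℝ) < 2 ^ (j+1) := one_lt_pow₀ (by norm_num) (by omega)
    linarith
  have hneg : (-1:ℝ)^n * ∏ m ∈ range n, ((1:ℝ) - 2^(m+1))/(1-p)
      = (∏ m ∈ range n, ((2:ℝ) ^ (m+1) - 1)) / (1-p)^n := by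
    rw [Finset.prod_div_distrib, Finset.prod_const, Finset.card_range, ← mul_div_assoc]
    congr 1
    calc (-1:ℝ)^n * ∏ m ∈ range n, ((1:ℝ) - 2^(m+1))
        = ∏ m ∈ range n, (-1) * ((1:ℝ) - 2^(m+1)) := by
          rw [Finset.prod_mul_distrib, Finset.prod_const, Finset.card_range]
      _ = ∏ m ∈ range n, ((2:ℝ)^(m+1) - 1) := Finset.prod_congr rfl fun m _ => by ring
  have hv0 : v 0 = 1 := by
    show L ((0 : Fin (n+1)) : ℕ) = 1
    rw [Fin.val_zero, hL0]
  have hdetA : A.det = c * ((∏ m ∈ range n, ((2:ℝ) ^ (m+1) - 1)) / (1-p)^n) := by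
    have := hcram
    rw [hv0, mul_one, hupd, Matrix.det_updateCol_smul, hdet1, mul_assoc, hneg] at this
    rw [this, hc]
    ring
  have hLHS : ∫ x in Set.Icc (0:ℝ) 1, x ^ (n+1) ∂μ = L (n+1) := by
    have hfm : Measurable fun x : ℝ => x ^ (n+1) := by fun_prop
    rw [hμν, setIntegral_map measurableSet_Icc
      hfm.aestronglyMeasurable
      Stmt4.measurable_binExpand.aemeasurable]
    have hpre : binExpand ⁻¹' Set.Icc (0:ℝ) 1 = Set.univ := by
      refine Set.eq_univ_of_forall fun x => ?_
      exact ⟨Stmt4.binExpand_nonneg x, Stmt4.binExpand_le_one x⟩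
    rw [hpre, Measure.restrict_univ]
  rw [hLHS, hdetA, hc, Finset.prod_range_succ]
  have hQn := hQ n
  have h2n : ((2:ℝ) ^ (n+1) - 1) ≠ 0 := by
    have h : (1:ℝ) < 2 ^ (n+1) := one_lt_pow₀ (by norm_num) (by omega)
    linarith
  field_simp
  ring
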